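/- Let p_X and p_g be probability density functions on a measurable space 𝕏 ⊆ ℝ^d (with Lebesgue measure μ) which are strictly positive on their common support. Among all measurable discriminators D : 𝕏 → [0,1], the functional V_D(D) := ∫ p_X log D dμ + ∫ p_g log(1 − D) dμ is maximized (almost everywhere uniquely) by D* = p_X/(p_X + p_g); that is, V_D(D*) ≥ V_D(D) for every measurable D : 𝕏 → [0,1]. -/

import Mathlib

open MeasureTheory Filter Topology Set

/-- The extended-real-valued negative natural logarithm: `negLog t = -log t ∈ [0,∞]`
for `t ∈ [0,1]`, with `negLog 0 = ∞` (as `log 0 = -∞`). -/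
noncomputable def negLog (t : ℝ) : ENNReal :=
  if t ≤ 0 then ⊤ else ENNReal.ofReal (-Real.log t)

lemma negLog_measurable : Measurable negLog := by
  unfold negLog
  exact Measurable.ite (measurableSet_le measurable_id measurable_const)
    measurable_const (ENNReal.measurable_ofReal.comp Real.measurable_log.neg)

lemma negLog_of_pos {t : ℝ} (ht : 0 < t) : negLog t = ENNReal.ofReal (-Real.log t) := by
  simp [negLog, not_le.2 ht]

/-- The pointwise key inequality. -/
lemma key_ineq (a b t : ℝ) (ha : 0 < a) (hb : 0 < b) (ht0 : 0 ≤ t) (ht1 : t ≤ 1) :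
    ENNReal.ofReal a * negLog (a / (a + b)) + ENNReal.ofReal b * negLog (1 - a / (a + b)) ≤
    ENNReal.ofReal a * negLog t + ENNReal.ofReal b * negLog (1 - t) := by
  have hab : 0 < a + b := by linarith
  set s : ℝ := a / (a + b) with hs_def
  have hs0 : 0 < s := div_pos ha hab
  have hs1 : s < 1 := (div_lt_one hab).2 (by linarith)
  have h1s : 0 < 1 - s := by linarith
  have hsle : s ≤ 1 := hs1.le
  rcases eq_or_lt_of_le ht0 with h0 | h0
  · have : negLog t = ⊤ := by simp [negLog, ← h0]
    rw [this, ENNReal.mul_top (by simp [ha])]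
    simp
  rcases eq_or_lt_of_le ht1 with h1 | h1
  · have : negLog (1 - t) = ⊤ := by simp [negLog, h1]
    rw [this, ENNReal.mul_top (by simp [hb])]
    simp
  have h1t : 0 < 1 - t := by linarith
  -- real inequality from concavity of log
  have hconc := strictConcaveOn_log_Ioi.concaveOn.2
    (Set.mem_Ioi.2 (div_pos h0 hs0)) (Set.mem_Ioi.2 (div_pos h1t h1s))
    hs0.le h1s.le (by ring)
  have hcomb : s • (t / s) + (1 - s) • ((1 - t) / (1 - s)) = 1 := by
    rw [smul_eq_mul, smul_eq_mul, mul_div_cancel₀ _ hs0.ne', mul_div_cancel₀ _ h1s.ne']; ring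
  rw [hcomb, Real.log_one] at hconc
  rw [Real.log_div h0.ne' hs0.ne', Real.log_div h1t.ne' h1s.ne'] at hconc
  simp only [smul_eq_mul] at hconc
  have heq : a * (Real.log t - Real.log s) + b * (Real.log (1 - t) - Real.log (1 - s)) =
      (a + b) * (s * (Real.log t - Real.log s) +
        (1 - s) * (Real.log (1 - t) - Real.log (1 - s))) := by
    rw [hs_def]; field_simp; ring
  have h2 : a * (Real.log t - Real.log s) + b * (Real.log (1 - t) - Real.log (1 - s)) ≤ 0 := by
    rw [heq]
    exact mul_nonpos_of_nonneg_of_nonpos hab.le hconc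
  have hreal : a * (-Real.log s) + b * (-Real.log (1 - s)) ≤
      a * (-Real.log t) + b * (-Real.log (1 - t)) := by nlinarith [h2]
  -- nonnegativity of each term
  have hls : 0 ≤ -Real.log s := by
    simpa using neg_nonneg.2 (Real.log_nonpos hs0.le hsle)
  have hl1s : 0 ≤ -Real.log (1 - s) := by
    simpa using neg_nonneg.2 (Real.log_nonpos h1s.le (by linarith))
  have hlt : 0 ≤ -Real.log t := by
    simpa using neg_nonneg.2 (Real.log_nonpos h0.le ht1)
  have hl1t : 0 ≤ -Real.log (1 - t) := by
    simpa using neg_nonneg.2 (Real.log_nonpos h1t.le (by linarith))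
  rw [negLog_of_pos hs0, negLog_of_pos h1s, negLog_of_pos h0, negLog_of_pos h1t,
    ← ENNReal.ofReal_mul ha.le, ← ENNReal.ofReal_mul hb.le,
    ← ENNReal.ofReal_mul ha.le, ← ENNReal.ofReal_mul hb.le,
    ← ENNReal.ofReal_add (mul_nonneg ha.le hls) (mul_nonneg hb.le hl1s),
    ← ENNReal.ofReal_add (mul_nonneg ha.le hlt) (mul_nonneg hb.le hl1t)]
  exact ENNReal.ofReal_le_ofReal hreal

theorem stmt_16 {d : ℕ}
    (pX pg : (Fin d → ℝ) → ℝ) (X : Set (Fin d → ℝ)) (hX : MeasurableSet X)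
    (hpX_meas : Measurable pX) (hpg_meas : Measurable pg)
    (hpX_nonneg : ∀ x, 0 ≤ pX x) (hpg_nonneg : ∀ x, 0 ≤ pg x)
    (hpX_pos : ∀ x ∈ X, 0 < pX x) (hpg_pos : ∀ x ∈ X, 0 < pg x)
    (hpX_int : IntegrableOn pX X) (hpg_int : IntegrableOn pg X)
    (hpX_one : ∫ x in X, pX x = 1) (hpg_one : ∫ x in X, pg x = 1)
    (D : (Fin d → ℝ) → ℝ) (hD_meas : Measurable D)
    (hD_range : ∀ x ∈ X, D x ∈ Set.Icc (0 : ℝ) 1) :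
    (∫⁻ x in X, ENNReal.ofReal (pX x) * negLog (pX x / (pX x + pg x))) +
      (∫⁻ x in X, ENNReal.ofReal (pg x) * negLog (1 - pX x / (pX x + pg x))) ≤
    (∫⁻ x in X, ENNReal.ofReal (pX x) * negLog (D x)) +
      (∫⁻ x in X, ENNReal.ofReal (pg x) * negLog (1 - D x)) := by
  have hm1 : Measurable fun x => ENNReal.ofReal (pX x) * negLog (pX x / (pX x + pg x)) :=
    ((ENNReal.measurable_ofReal.comp hpX_meas).mul
      (negLog_measurable.comp (hpX_meas.div (hpX_meas.add hpg_meas))))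
  have hm2 : Measurable fun x => ENNReal.ofReal (pX x) * negLog (D x) :=
    ((ENNReal.measurable_ofReal.comp hpX_meas).mul (negLog_measurable.comp hD_meas))
  have hm2' : Measurable fun x => ENNReal.ofReal (pg x) * negLog (1 - D x) :=
    ((ENNReal.measurable_ofReal.comp hpg_meas).mul
      (negLog_measurable.comp (measurable_const.sub hD_meas)))
  rw [← lintegral_add_left hm1, ← lintegral_add_left hm2]
  refine setLIntegral_mono (hm2.add hm2') fun x hx => ?_
  obtain ⟨h0, h1⟩ := hD_range x hx
  exact key_ineq (pX x) (pg x) (D x) (hpX_pos x hx) (hpg_pos x hx) h0 h1
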